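/- Let φ : A → B be a dense and spectral morphism of unital complex Banach algebras. Then csr A = csr B. -/

import Mathlib

open Metric Set

/-- The set of unimodular `n`-tuples: tuples `(a₁, …, aₙ)` with `A·a₁ + ⋯ + A·aₙ = A`. -/
def Lg (A : Type*) [Ring A] (n : ℕ) : Set (Fin n → A) :=
  {a | ∃ x : Fin n → A, ∑ i, x i * a i = 1}

/-- The connected stable rank: the least `n ≥ 1` such that `Lg_m(A)` is connected
for all `m ≥ n`. -/
noncomputable def csr (A : Type*) [Ring A] [TopologicalSpace A] : ℕ∞ :=
  sInf {c : ℕ∞ | ∃ n : ℕ, c = n ∧ 1 ≤ n ∧ ∀ m : ℕ, n ≤ m → IsConnected (Lg A m)}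

section Aux

lemma isUnit_one_add {R : Type*} [NormedRing R] [CompleteSpace R] {z : R} (h : ‖z‖ < 1) :
    IsUnit (1 + z) :=
  ⟨Units.oneSub (-z) (by rwa [norm_neg]), by show 1 - -z = 1 + z; rw [sub_neg_eq_add]⟩

lemma lg_of_isUnit {R : Type*} [NormedRing R] {n : ℕ} {x v : Fin n → R}
    (h : IsUnit (∑ i, x i * v i)) : v ∈ Lg R n := by
  obtain ⟨u, hu⟩ := h
  refine ⟨fun i => (↑u⁻¹ : R) * x i, ?_⟩
  have : ∑ i, (↑u⁻¹ : R) * x i * v i = (↑u⁻¹ : R) * ∑ i, x i * v i := by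
    rw [Finset.mul_sum]; simp [mul_assoc]
  rw [this, ← hu, Units.inv_mul]

lemma lg_nonempty {R : Type*} [NormedRing R] {n : ℕ} (hn : 1 ≤ n) : (Lg R n).Nonempty := by
  refine ⟨fun _ => 1, Pi.single ⟨0, hn⟩ 1, ?_⟩
  simp [Finset.sum_pi_single']

lemma ball_subset_lg {R : Type*} [NormedRing R] [CompleteSpace R] {n : ℕ} {b : Fin n → R}
    (hb : b ∈ Lg R n) : ∃ r > 0, ball b r ⊆ Lg R n := by
  obtain ⟨x, hx⟩ := hb
  set S : ℝ := ∑ i, ‖x i‖ with hS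
  have hS0 : 0 ≤ S := Finset.sum_nonneg fun i _ => norm_nonneg _
  refine ⟨(S + 1)⁻¹, by positivity, fun v hv => ?_⟩
  have hvb : dist v b < (S + 1)⁻¹ := mem_ball.mp hv
  have hz : ‖∑ i, x i * (v i - b i)‖ < 1 := by
    calc ‖∑ i, x i * (v i - b i)‖ ≤ ∑ i, ‖x i * (v i - b i)‖ := norm_sum_le _ _
      _ ≤ ∑ i, ‖x i‖ * dist v b := by
          refine Finset.sum_le_sum fun i _ => ?_
          calc ‖x i * (v i - b i)‖ ≤ ‖x i‖ * ‖v i - b i‖ := norm_mul_le _ _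
            _ ≤ ‖x i‖ * dist v b := by
                rw [← dist_eq_norm]
                exact mul_le_mul_of_nonneg_left (dist_le_pi_dist v b i) (norm_nonneg _)
      _ = S * dist v b := by rw [← Finset.sum_mul]
      _ ≤ S * (S + 1)⁻¹ := mul_le_mul_of_nonneg_left hvb.le hS0
      _ < 1 := by
          rw [← div_eq_mul_inv, div_lt_one (by positivity)]; linarith
  have hsum : ∑ i, x i * v i = 1 + ∑ i, x i * (v i - b i) := by
    rw [← hx, ← Finset.sum_add_distrib]
    exact Finset.sum_congr rfl fun i _ => by rw [mul_sub]; abel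
  exact lg_of_isUnit (hsum ▸ isUnit_one_add hz)

lemma lg_isOpen {R : Type*} [NormedRing R] [CompleteSpace R] {n : ℕ} : IsOpen (Lg R n) :=
  Metric.isOpen_iff.mpr fun b hb => by
    obtain ⟨r, hr, h⟩ := ball_subset_lg hb; exact ⟨r, hr, h⟩

lemma chain_preconnected {E : Type*} [SeminormedAddCommGroup E] [NormedSpace ℝ E] (c : ℕ → E) :
    ∀ N : ℕ, IsPreconnected (⋃ k ∈ Finset.range N, segment ℝ (c k) (c (k + 1)))
  | 0 => by simpa using isPreconnected_empty
  | 1 => by simpa using (convex_segment (c 0) (c 1)).isPreconnected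
  | (N + 2) => by
      rw [Finset.range_add_one, Finset.set_biUnion_insert]
      refine IsPreconnected.union (c (N + 1)) (left_mem_segment ℝ _ _) ?_
        (convex_segment _ _).isPreconnected (chain_preconnected c (N + 1))
      simp only [Set.mem_iUnion, Finset.mem_range]
      exact ⟨N, Nat.lt_succ_self N, right_mem_segment ℝ _ _⟩

end Aux

section Main

variable {A B : Type*}
    [NormedRing A] [NormedAlgebra ℂ A] [CompleteSpace A]
    [NormedRing B] [NormedAlgebra ℂ B] [CompleteSpace B]
    (φ : A →ₐ[ℂ] B)

lemma map_mem_lg {n : ℕ} {a : Fin n → A} (h : a ∈ Lg A n) : (fun i => φ (a i)) ∈ Lg B n := by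
  obtain ⟨x, hx⟩ := h
  exact ⟨fun i => φ (x i), by simp only [← map_mul, ← map_sum, hx, map_one]⟩

lemma mem_lg_of_map_mem (hdense : DenseRange φ)
    (hspec : ∀ a : A, spectrum ℂ (φ a) = spectrum ℂ a)
    {n : ℕ} {a : Fin n → A} (h : (fun i => φ (a i)) ∈ Lg B n) : a ∈ Lg A n := by
  obtain ⟨y, hy⟩ := h
  set S : ℝ := ∑ i, ‖φ (a i)‖ with hS
  have hS0 : 0 ≤ S := Finset.sum_nonneg fun i _ => norm_nonneg _
  have hε : (0 : ℝ) < (S + 1)⁻¹ := by positivity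
  choose x hxy using fun i => hdense.exists_dist_lt (y i) hε
  have hz : ‖∑ i, (φ (x i) - y i) * φ (a i)‖ < 1 := by
    calc ‖∑ i, (φ (x i) - y i) * φ (a i)‖ ≤ ∑ i, ‖(φ (x i) - y i) * φ (a i)‖ := norm_sum_le _ _
      _ ≤ ∑ i, (S + 1)⁻¹ * ‖φ (a i)‖ := by
          refine Finset.sum_le_sum fun i _ => ?_
          calc ‖(φ (x i) - y i) * φ (a i)‖ ≤ ‖φ (x i) - y i‖ * ‖φ (a i)‖ := norm_mul_le _ _
            _ ≤ (S + 1)⁻¹ * ‖φ (a i)‖ := by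
                have : ‖φ (x i) - y i‖ < (S + 1)⁻¹ := by
                  rw [← dist_eq_norm, dist_comm]; exact hxy i
                exact mul_le_mul_of_nonneg_right this.le (norm_nonneg _)
      _ = (S + 1)⁻¹ * S := by rw [← Finset.mul_sum]
      _ < 1 := by
          rw [mul_comm, ← div_eq_mul_inv, div_lt_one (by positivity)]; linarith
  have hφs : φ (∑ i, x i * a i) = 1 + ∑ i, (φ (x i) - y i) * φ (a i) := by
    rw [map_sum]
    simp only [map_mul]
    rw [← hy, ← Finset.sum_add_distrib]
    exact Finset.sum_congr rfl fun i _ => by rw [sub_mul]; abel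
  have hunitB : IsUnit (φ (∑ i, x i * a i)) := hφs ▸ isUnit_one_add hz
  have hunitA : IsUnit (∑ i, x i * a i) := by
    by_contra hc
    have h0 : (0 : ℂ) ∈ spectrum ℂ (∑ i, x i * a i) := (spectrum.zero_mem_iff ℂ).mpr hc
    rw [← hspec] at h0
    exact (spectrum.zero_mem_iff ℂ).mp h0 hunitB
  exact lg_of_isUnit hunitA

lemma map_segment {n : ℕ} {u v w : Fin n → A} (hw : w ∈ segment ℝ u v) :
    (fun i => φ (w i)) ∈ segment ℝ (fun i => φ (u i)) (fun i => φ (v i)) := by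
  obtain ⟨s, t, hs, ht, hst, rfl⟩ := hw
  refine ⟨s, t, hs, ht, hst, ?_⟩
  have hsmul : ∀ (r : ℝ) (z : A), φ (r • z) = r • φ z := fun r z => by
    rw [← Complex.coe_smul, ← Complex.coe_smul, map_smul]
  funext i
  simp only [Pi.add_apply, Pi.smul_apply, map_add, hsmul]

lemma lg_B_connected (hdense : DenseRange φ)
    (hspec : ∀ a : A, spectrum ℂ (φ a) = spectrum ℂ a)
    (hcont : Continuous φ) {n : ℕ} (hn : 1 ≤ n) (hA : IsConnected (Lg A n)) :
    IsConnected (Lg B n) := by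
  obtain ⟨a0, ha0⟩ := lg_nonempty (R := A) hn
  refine ⟨⟨_, map_mem_lg φ ha0⟩, isPreconnected_of_forall_pair ?_⟩
  intro b1 hb1 b2 hb2
  obtain ⟨r1, hr1, hball1⟩ := ball_subset_lg hb1
  obtain ⟨r2, hr2, hball2⟩ := ball_subset_lg hb2
  choose x1 hx1 using fun i => hdense.exists_dist_lt (b1 i) hr1
  choose x2 hx2 using fun i => hdense.exists_dist_lt (b2 i) hr2
  have hφ1 : (fun i => φ (x1 i)) ∈ ball b1 r1 := by
    rw [mem_ball, dist_pi_lt_iff hr1]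
    exact fun i => by rw [dist_comm]; exact hx1 i
  have hφ2 : (fun i => φ (x2 i)) ∈ ball b2 r2 := by
    rw [mem_ball, dist_pi_lt_iff hr2]
    exact fun i => by rw [dist_comm]; exact hx2 i
  have ha1 : x1 ∈ Lg A n := mem_lg_of_map_mem φ hdense hspec (hball1 hφ1)
  have ha2 : x2 ∈ Lg A n := mem_lg_of_map_mem φ hdense hspec (hball2 hφ2)
  set f : (Fin n → A) → Fin n → B := fun a i => φ (a i) with hf
  have hfc : Continuous f := continuous_pi fun i => hcont.comp (continuous_apply i)
  refine ⟨segment ℝ b1 (f x1) ∪ f '' Lg A n ∪ segment ℝ (f x2) b2, ?_, ?_, ?_, ?_⟩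
  · refine union_subset (union_subset ?_ ?_) ?_
    · exact ((convex_ball b1 r1).segment_subset (mem_ball_self hr1) hφ1).trans hball1
    · rintro _ ⟨a, ha, rfl⟩; exact map_mem_lg φ ha
    · exact ((convex_ball b2 r2).segment_subset hφ2 (mem_ball_self hr2)).trans hball2
  · exact Or.inl (Or.inl (left_mem_segment ℝ _ _))
  · exact Or.inr (right_mem_segment ℝ _ _)
  · refine IsPreconnected.union (f x2) ?_ (left_mem_segment ℝ _ _) ?_
      (convex_segment _ _).isPreconnected
    · exact Or.inr ⟨x2, ha2, rfl⟩
    · refine IsPreconnected.union (f x1) (right_mem_segment ℝ _ _) ⟨x1, ha1, rfl⟩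
        (convex_segment _ _).isPreconnected (hA.isPreconnected.image f hfc.continuousOn)

lemma lg_A_connected (hdense : DenseRange φ)
    (hspec : ∀ a : A, spectrum ℂ (φ a) = spectrum ℂ a)
    {n : ℕ} (hn : 1 ≤ n) (hB : IsConnected (Lg B n)) :
    IsConnected (Lg A n) := by
  refine ⟨lg_nonempty hn, isPreconnected_of_forall_pair ?_⟩
  intro a1 ha1 a2 ha2
  have hopen : IsOpen (Lg B n) := lg_isOpen
  have hpath : IsPathConnected (Lg B n) := hopen.isConnected_iff_isPathConnected.mp hB
  obtain ⟨γ, hγ⟩ := hpath.joinedIn _ (map_mem_lg φ ha1) _ (map_mem_lg φ ha2)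
  have hcomp : IsCompact (range γ) := isCompact_range γ.continuous
  obtain ⟨δ, hδ, hthick⟩ := hcomp.exists_thickening_subset_open hopen (range_subset_iff.mpr hγ)
  have hballγ : ∀ t : unitInterval, ball (γ t) δ ⊆ Lg B n := fun t y hy =>
    hthick (Metric.mem_thickening_iff.mpr ⟨γ t, mem_range_self t, hy⟩)
  have huc : UniformContinuous γ := CompactSpace.uniformContinuous_of_continuous γ.continuous
  obtain ⟨η, hη, hu⟩ := Metric.uniformContinuous_iff.mp huc (δ / 3) (by positivity)
  obtain ⟨N, hN⟩ := exists_nat_gt (1 / η)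
  have hNR : (0 : ℝ) < N := lt_trans (by positivity) hN
  have hN1 : 1 ≤ N := by exact_mod_cast Nat.one_le_iff_ne_zero.mpr (by rintro rfl; simp at hNR)
  have hstep : (1 : ℝ) / N < η := by
    rw [div_lt_iff₀ hNR]
    have := (div_lt_iff₀ hη).mp hN
    linarith [this]
  set τ : ℕ → unitInterval := fun k =>
    ⟨min ((k : ℝ) / N) 1, ⟨le_min (by positivity) zero_le_one, min_le_right _ _⟩⟩ with hτdef
  have hτval : ∀ k, k ≤ N → ((τ k : ℝ)) = (k : ℝ) / N := fun k hk =>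
    min_eq_left (by rw [div_le_one hNR]; exact_mod_cast hk)
  have hτ0 : τ 0 = 0 := by
    ext; simpa using hτval 0 (Nat.zero_le _) |>.trans (by simp : ((0 : ℕ) : ℝ) / N = 0)
  have hτN : τ N = 1 := by
    ext; rw [show ((1 : unitInterval) : ℝ) = 1 from rfl, hτval N le_rfl, div_self hNR.ne']
  have happrox : ∀ t : unitInterval, ∃ u : Fin n → A,
      dist (fun i => φ (u i)) (γ t) < δ / 3 := by
    intro t
    choose u hu using fun i => hdense.exists_dist_lt (γ t i) (by positivity : (0 : ℝ) < δ / 3)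
    exact ⟨u, (dist_pi_lt_iff (by positivity)).mpr fun i => by rw [dist_comm]; exact hu i⟩
  set c : ℕ → (Fin n → A) := fun k =>
    if k = 0 then a1 else if N ≤ k then a2 else Classical.choose (happrox (τ k)) with hcdef
  have hc0 : c 0 = a1 := by simp [hcdef]
  have hcN : c N = a2 := by
    simp only [hcdef]
    rw [if_neg (by omega), if_pos le_rfl]
  have hck : ∀ k, k ≤ N → dist (fun i => φ (c k i)) (γ (τ k)) < δ / 3 := by
    intro k hk
    rcases eq_or_ne k 0 with rfl | h0
    · rw [hc0, hτ0, γ.source, dist_self]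
      positivity
    rcases eq_or_ne k N with rfl | hkN
    · rw [hcN, hτN, γ.target, dist_self]
      positivity
    · have hlt : ¬ N ≤ k := by omega
      simp only [hcdef, if_neg h0, if_neg hlt]
      exact Classical.choose_spec (happrox (τ k))
  have hseg : ∀ k, k < N → segment ℝ (c k) (c (k + 1)) ⊆ Lg A n := by
    intro k hk w hw
    have hk1 : k + 1 ≤ N := hk
    have h1 : (fun i => φ (c k i)) ∈ ball (γ (τ k)) δ :=
      mem_ball.mpr ((hck k hk.le).trans (by linarith))
    have hdistτ : dist (γ (τ (k + 1))) (γ (τ k)) < δ / 3 := by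
      apply hu
      rw [Subtype.dist_eq, hτval _ hk1, hτval _ hk.le, Real.dist_eq]
      have heq : |((k + 1 : ℕ) : ℝ) / N - (k : ℝ) / N| = 1 / N := by
        rw [div_sub_div_same]
        push_cast
        rw [add_sub_cancel_left, abs_of_nonneg (by positivity)]
      rw [heq]
      exact hstep
    have h2 : (fun i => φ (c (k + 1) i)) ∈ ball (γ (τ k)) δ := by
      rw [mem_ball]
      calc dist (fun i => φ (c (k + 1) i)) (γ (τ k))
          ≤ dist (fun i => φ (c (k + 1) i)) (γ (τ (k + 1))) + dist (γ (τ (k + 1))) (γ (τ k)) :=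
            dist_triangle _ _ _
        _ < δ / 3 + δ / 3 := add_lt_add (hck _ hk1) hdistτ
        _ ≤ δ := by linarith
    have hsub : segment ℝ (fun i => φ (c k i)) (fun i => φ (c (k + 1) i)) ⊆ Lg B n :=
      ((convex_ball _ _).segment_subset h1 h2).trans (hballγ (τ k))
    exact mem_lg_of_map_mem φ hdense hspec (hsub (map_segment φ hw))
  refine ⟨⋃ k ∈ Finset.range N, segment ℝ (c k) (c (k + 1)), ?_, ?_, ?_, chain_preconnected c N⟩
  · intro w hw
    simp only [Set.mem_iUnion, Finset.mem_range] at hw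
    obtain ⟨k, hk, hw⟩ := hw
    exact hseg k hk hw
  · simp only [Set.mem_iUnion, Finset.mem_range]
    exact ⟨0, hN1, hc0 ▸ left_mem_segment ℝ _ _⟩
  · obtain ⟨M, rfl⟩ : ∃ M, N = M + 1 := ⟨N - 1, by omega⟩
    simp only [Set.mem_iUnion, Finset.mem_range]
    exact ⟨M, Nat.lt_succ_self M, hcN ▸ right_mem_segment ℝ _ _⟩

end Main

/-- If `φ : A → B` is a dense and spectral morphism of unital complex Banach algebras,
then `csr A = csr B`. -/
theorem csr_eq_csr_of_dense_spectral {A B : Type*}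
    [NormedRing A] [NormedAlgebra ℂ A] [CompleteSpace A]
    [NormedRing B] [NormedAlgebra ℂ B] [CompleteSpace B]
    (φ : A →ₐ[ℂ] B) (hcont : Continuous φ) (hdense : DenseRange φ)
    (hspec : ∀ a : A, spectrum ℂ (φ a) = spectrum ℂ a) :
    csr A = csr B := by
  have key : ∀ m : ℕ, 1 ≤ m → (IsConnected (Lg A m) ↔ IsConnected (Lg B m)) := fun m hm =>
    ⟨lg_B_connected φ hdense hspec hcont hm, lg_A_connected φ hdense hspec hm⟩
  unfold csr
  congr 1
  ext c
  constructor
  · rintro ⟨n, rfl, hn, h⟩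
    exact ⟨n, rfl, hn, fun m hm => (key m (hn.trans hm)).mp (h m hm)⟩
  · rintro ⟨n, rfl, hn, h⟩
    exact ⟨n, rfl, hn, fun m hm => (key m (hn.trans hm)).mpr (h m hm)⟩
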